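/- Let A ⊂ ℤ₍≥0₎ⁿ be a finite set, d_A = max_{a∈A}(a₁+⋯+aₙ), and Ω the set of monomials x₀^{d_A−|a|} x₁^{a₁} ⋯ xₙ^{aₙ} in K[x₀,…,xₙ] for a ∈ A (K a field). Then for every t ≥ 0, the dimension over K of the span of degree-t·d_A monomials in the subalgebra K[Ω] generated by Ω equals |tA|, the cardinality of the t-fold sumset of A. -/

import Mathlib

open Pointwise

private lemma prod_monomial_aux {σ : Type*} {R : Type*} [CommSemiring R] {ι : Type*}
    (s : Finset ι) (e : ι → (σ →₀ ℕ)) :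
    ∏ i ∈ s, MvPolynomial.monomial (e i) (1 : R)
      = MvPolynomial.monomial (∑ i ∈ s, e i) 1 := by
  induction s using Finset.cons_induction with
  | empty => simp
  | cons a s ha ih =>
      rw [Finset.prod_cons, Finset.sum_cons, ih, MvPolynomial.monomial_mul, one_mul]

private lemma mem_nsmul_finset_aux {M : Type*} [AddCommMonoid M] [DecidableEq M]
    (t : ℕ) (A : Finset M) (b : M) :
    b ∈ t • A ↔ ∃ f : Fin t → M, (∀ i, f i ∈ A) ∧ b = ∑ i, f i := by
  induction t generalizing b with
  | zero =>
      simp [zero_nsmul, Finset.mem_zero, eq_comm]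
  | succ t ih =>
      rw [succ_nsmul, Finset.mem_add]
      constructor
      · rintro ⟨y, hy, z, hz, rfl⟩
        obtain ⟨f, hf, rfl⟩ := (ih y).1 hy
        refine ⟨Fin.snoc f z, ?_, ?_⟩
        · intro i
          refine Fin.lastCases ?_ ?_ i
          · simpa using hz
          · intro j; simpa using hf j
        · rw [Fin.sum_univ_castSucc]
          simp
      · rintro ⟨f, hf, rfl⟩
        refine ⟨∑ i : Fin t, f (Fin.castSucc i), (ih _).2 ⟨_, fun i => hf _, rfl⟩,
          f (Fin.last t), hf _, ?_⟩
        rw [Fin.sum_univ_castSucc]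

/-- Let `A ⊂ ℤ₍≥0₎ⁿ` be finite with `d_A = max_{a∈A} |a|`, and let `Ω` be the set of monomials
`x₀^{d_A−|a|} x₁^{a₁} ⋯ xₙ^{aₙ}` for `a ∈ A` in `K[x₀,…,xₙ]`. Then for every `t ≥ 0`, the
`K`-dimension of the span of the degree-`t·d_A` part of `K[Ω]` (spanned by products of `t`
monomials from `Ω`) equals `|tA|`. -/
theorem stmt_14 (K : Type*) [Field K] (n d : ℕ) (A : Finset (Fin n → ℕ))
    (hdmax : IsGreatest {s : ℕ | ∃ a ∈ A, s = ∑ i, a i} d)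
    (Ω : Set (MvPolynomial (Fin (n + 1)) K))
    (hΩ : Ω = (fun a : Fin n → ℕ =>
      MvPolynomial.monomial (Finsupp.equivFunOnFinite.symm (Fin.cons (d - ∑ i, a i) a))
        (1 : K)) '' (A : Set _)) :
    ∀ t : ℕ, Module.finrank K (Submodule.span K
        {p : MvPolynomial (Fin (n + 1)) K |
          ∃ f : Fin t → MvPolynomial (Fin (n + 1)) K, (∀ i, f i ∈ Ω) ∧ p = ∏ i, f i})
      = (t • A).card := by
  intro t
  classical
  have hle : ∀ a ∈ A, ∑ i, a i ≤ d := fun a ha => hdmax.2 ⟨a, ha, rfl⟩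
  -- the exponent map on the sumset
  set ψ : (Fin n → ℕ) → (Fin (n + 1) →₀ ℕ) := fun b =>
    Finsupp.equivFunOnFinite.symm (Fin.cons (t * d - ∑ i, b i) b) with hψ
  have hψinj : Function.Injective ψ := by
    intro b b' h
    have := congrArg (fun f => Fin.tail (Finsupp.equivFunOnFinite f)) h
    simpa [ψ, Fin.tail_cons] using this
  set g : (Fin n → ℕ) → MvPolynomial (Fin (n + 1)) K := fun b =>
    MvPolynomial.monomial (ψ b) 1 with hg
  have hginj : Function.Injective g :=
    (MvPolynomial.monomial_left_injective (one_ne_zero)).comp hψinj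
  -- key computation: products of monomials from Ω
  have key : ∀ a : Fin t → (Fin n → ℕ), (∀ i, a i ∈ A) →
      (∏ i, MvPolynomial.monomial
        (Finsupp.equivFunOnFinite.symm (Fin.cons (d - ∑ j, a i j) (a i))) (1 : K))
        = g (∑ i, a i) := by
    intro a ha
    rw [prod_monomial_aux]
    have hexp : (∑ i, Finsupp.equivFunOnFinite.symm (Fin.cons (d - ∑ j, a i j) (a i)))
        = ψ (∑ i, a i) := by
      ext k
      rw [Finsupp.finset_sum_apply]
      simp only [ψ, Finsupp.equivFunOnFinite_symm_apply_apply]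
      refine Fin.cases ?_ ?_ k
      · simp only [Fin.cons_zero]
        rw [Finset.sum_tsub_distrib _ (fun i _ => hle _ (ha i))]
        congr 1
        · simp [mul_comm]
        · rw [Finset.sum_comm]
          simp [Finset.sum_apply]
      · intro j
        simp [Finset.sum_apply]
    rw [hexp]
  -- the set of products equals the image of the sumset
  have hset : {p : MvPolynomial (Fin (n + 1)) K |
        ∃ f : Fin t → MvPolynomial (Fin (n + 1)) K, (∀ i, f i ∈ Ω) ∧ p = ∏ i, f i}
      = ((t • A).image g : Finset (MvPolynomial (Fin (n + 1)) K)) := by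
    ext p
    simp only [Set.mem_setOf_eq, Finset.coe_image, Set.mem_image, Finset.mem_coe]
    constructor
    · rintro ⟨f, hf, rfl⟩
      have : ∀ i, ∃ a ∈ A, f i = MvPolynomial.monomial
          (Finsupp.equivFunOnFinite.symm (Fin.cons (d - ∑ j, a j) a)) (1 : K) := by
        intro i
        have := hf i
        rw [hΩ] at this
        obtain ⟨a, ha, h⟩ := this
        exact ⟨a, ha, h.symm⟩
      choose a ha hfa using this
      refine ⟨∑ i, a i, (mem_nsmul_finset_aux t A _).2 ⟨a, ha, rfl⟩, ?_⟩
      rw [← key a ha]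
      exact Finset.prod_congr rfl fun i _ => (hfa i).symm
    · rintro ⟨b, hb, rfl⟩
      obtain ⟨a, ha, rfl⟩ := (mem_nsmul_finset_aux t A b).1 hb
      exact ⟨fun i => MvPolynomial.monomial
          (Finsupp.equivFunOnFinite.symm (Fin.cons (d - ∑ j, a i j) (a i))) (1 : K),
        fun i => hΩ ▸ ⟨a i, ha i, rfl⟩, (key a ha).symm⟩
  rw [hset, finrank_span_finset_eq_card, Finset.card_image_of_injective _ hginj]
  -- linear independence
  have hsub : ((t • A).image g : Set (MvPolynomial (Fin (n + 1)) K))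
      ⊆ Set.range (MvPolynomial.basisMonomials (Fin (n + 1)) K) := by
    rintro p hp
    rw [Finset.coe_image] at hp
    obtain ⟨b, _, rfl⟩ := hp
    exact ⟨ψ b, by rw [MvPolynomial.coe_basisMonomials]⟩
  exact ((MvPolynomial.basisMonomials (Fin (n + 1)) K).linearIndependent.linearIndepOn_id).mono
    hsub
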